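/- arXiv:0903.2648 — 4 statements merged into one kernel-verified Lean document; each statement's English description precedes it below -/
import Mathlib

section
/- Let D ⊆ ℂ be a connected open set that is invariant both under complex conjugation and under x ↦ -conj(x), and let α : ℂ → ℂ be analytic on D. Define R²(x,z) = (z - α(x))·(z - conj(α(conj(x)))) for x ∈ D, z ∈ ℂ. Then the identity R²(-conj(x), -conj(z)) = conj(R²(x,z)) holds for all x ∈ D and all z ∈ ℂ if and only if either α is odd on D (α(-x) = -α(x) for all x ∈ D) or α satisfies α(-conj(x)) = -conj(α(x)) for all x ∈ D. -/
open Complex ComplexConjugate Topology Filter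

/-- reflection of a holomorphic function is holomorphic -/
lemma hasDerivAt_conj_comp {α : ℂ → ℂ} {a w : ℂ}
    (h : HasDerivAt α a (conj w)) :
    HasDerivAt (fun y => conj (α (conj y))) (conj a) w := by
  rw [hasDerivAt_iff_tendsto_slope] at h ⊢
  have hmap : Filter.Tendsto (fun y : ℂ => conj y) (𝓝[≠] w) (𝓝[≠] (conj w)) := by
    apply ContinuousWithinAt.tendsto_nhdsWithin (Complex.continuous_conj.continuousWithinAt)
    intro y hy hc
    exact hy (by simpa using congrArg conj (Set.mem_singleton_iff.mp hc))
  have hc : Filter.Tendsto (fun z : ℂ => conj z) (𝓝 a) (𝓝 (conj a)) :=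
    Complex.continuous_conj.continuousAt
  have := hc.comp (h.comp hmap)
  refine this.congr (fun y => ?_)
  simp only [Function.comp_apply, slope_def_field]
  simp [map_sub, map_div₀]

lemma diffAt_conj_comp {α : ℂ → ℂ} {w : ℂ}
    (h : DifferentiableAt ℂ α (conj w)) :
    DifferentiableAt ℂ (fun y => conj (α (conj y))) w :=
  (hasDerivAt_conj_comp h.hasDerivAt).differentiableAt

/-- product of analytic functions vanishing on connected open set -/
lemma mul_zero_analytic {D : Set ℂ} (hD : IsOpen D) (hconn : IsConnected D)
    {f g : ℂ → ℂ} (hf : AnalyticOnNhd ℂ f D) (hg : AnalyticOnNhd ℂ g D)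
    (h : ∀ x ∈ D, f x = 0 ∨ g x = 0) :
    (∀ x ∈ D, f x = 0) ∨ (∀ x ∈ D, g x = 0) := by
  by_cases hf0 : ∀ x ∈ D, f x = 0
  · exact Or.inl hf0
  push_neg at hf0
  obtain ⟨x0, hx0, hfx0⟩ := hf0
  right
  have hev : ∀ᶠ y in 𝓝 x0, g y = 0 := by
    have h1 : ∀ᶠ y in 𝓝 x0, f y ≠ 0 :=
      (hf x0 hx0).continuousAt.eventually_ne hfx0
    have h2 : ∀ᶠ y in 𝓝 x0, y ∈ D := hD.mem_nhds hx0
    filter_upwards [h1, h2] with y h1 h2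
    exact (h y h2).resolve_left h1
  intro x hx
  have := hg.eqOn_zero_of_preconnected_of_eventuallyEq_zero hconn.isPreconnected hx0
    (Filter.eventuallyEq_of_mem hev (fun _ h => h)) hx
  simpa using this

/-- Statement 6.3 (symR2): the symmetry `R²(-x̄, -z̄) = conj(R²(x,z))` of
`R²(x,z) = (z - α(x))(z - conj(α(x̄)))` holds for all `x ∈ D`, `z ∈ ℂ` if and only if
`α` is odd on `D` or `α` satisfies `α(-x̄) = -conj(α(x))` on `D`. -/
theorem stmt_2 (D : Set ℂ) (hD : IsOpen D) (hconn : IsConnected D)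
    (hDconj : ∀ x ∈ D, conj x ∈ D) (hDsym : ∀ x ∈ D, -(conj x) ∈ D)
    (α : ℂ → ℂ) (hα : ∀ x ∈ D, DifferentiableAt ℂ α x)
    (R2 : ℂ → ℂ → ℂ)
    (hR2 : ∀ x z : ℂ, R2 x z = (z - α x) * (z - conj (α (conj x)))) :
    (∀ x ∈ D, ∀ z : ℂ, R2 (-(conj x)) (-(conj z)) = conj (R2 x z)) ↔
      ((∀ x ∈ D, α (-x) = -α x) ∨ (∀ x ∈ D, α (-(conj x)) = -conj (α x))) := by
  have hneg : ∀ x ∈ D, -x ∈ D := fun x hx => by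
    simpa using hDsym _ (hDconj x hx)
  constructor
  · intro h
    set f : ℂ → ℂ := fun x => α (-x) + α x with hf
    set g : ℂ → ℂ := fun x => conj (α (conj (-x))) + α x with hg
    have hpt : ∀ x ∈ D, f x = 0 ∨ g x = 0 := by
      intro x hx
      have key := h x hx (α x)
      rw [hR2, hR2] at key
      simp only [sub_self, zero_mul, map_zero] at key
      rcases mul_eq_zero.mp key with h1 | h1
      · right
        have : α (-(conj x)) = -conj (α x) := by linear_combination -h1
        have := congrArg conj this
        simp only [map_neg, Complex.conj_conj] at this
        show conj (α (conj (-x))) + α x = 0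
        rw [show conj (-x) = -(conj x) by simp, this]
        ring
      · left
        have h2 : conj (α (conj (-(conj x)))) = -conj (α x) := by linear_combination -h1
        rw [show conj (-(conj x)) = -x by simp] at h2
        have := congrArg conj h2
        simp only [map_neg, Complex.conj_conj] at this
        show α (-x) + α x = 0
        rw [this]; ring
    have hfa : AnalyticOnNhd ℂ f D := by
      apply DifferentiableOn.analyticOnNhd _ hD
      intro x hx
      exact (((hα (-x) (hneg x hx)).comp x differentiableAt_id.neg).add
        (hα x hx)).differentiableWithinAt
    have hga : AnalyticOnNhd ℂ g D := by
      apply DifferentiableOn.analyticOnNhd _ hD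
      intro x hx
      have h1 : DifferentiableAt ℂ (fun y => conj (α (conj y))) (-x) :=
        diffAt_conj_comp (by
          have : conj (-x) = -(conj x) := by simp
          rw [this]; exact hα _ (hDsym x hx))
      exact ((h1.comp x differentiableAt_id.neg).add (hα x hx)).differentiableWithinAt
    rcases mul_zero_analytic hD hconn hfa hga hpt with h0 | h0
    · left
      intro x hx
      have := h0 x hx
      simp only [hf] at this
      linear_combination this
    · right
      intro x hx
      have := h0 x hx
      simp only [hg] at this
      rw [show conj (-x) = -(conj x) by simp] at this
      have h2 : conj (α (-(conj x))) = -α x := by linear_combination this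
      have h3 := congrArg conj h2
      simpa using h3
  · rintro (hodd | hsym) <;> intro x hx z <;> rw [hR2, hR2]
    · rw [show conj (-(conj x)) = -x by simp, hodd _ (hDconj x hx), hodd x hx]
      simp only [map_mul, map_sub, Complex.conj_conj, map_neg]
      ring
    · have h1 := hsym x hx
      have h2 := hsym (conj x) (hDconj x hx)
      rw [Complex.conj_conj] at h2
      rw [show conj (-(conj x)) = -x by simp, h1, h2]
      simp only [map_mul, map_sub, Complex.conj_conj, map_neg]
      ring
end

section
/- Let γ : [0,1] → ℂ be continuously differentiable, let f : ℂ → ℂ be continuous on the image of γ, let z, β ∈ ℂ with z not in the image of γ, let U ⊆ ℂ be open and α₀ ∈ U with (z - α₀)(z - β) ≠ 0. Suppose ρ : U × [0,1] → ℂ is continuous, for each fixed t ∈ [0,1] the map α ↦ ρ(α,t) is complex-differentiable on U, and ρ(α,t)² = (γ(t) - α)(γ(t) - β) with ρ(α,t) ≠ 0 for all (α,t) ∈ U × [0,1]. Suppose R : U → ℂ is complex-differentiable at α₀ and R(α)² = (z - α)(z - β) on U. Define g(α) = (R(α)/(4πi)) · ∫₀¹ f(γ(t)) γ'(t) / ((γ(t)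 - z) ρ(α,t)) dt. Then g is complex-differentiable at α₀ with g'(α₀) = -(R(α₀)/(8πi(z - α₀))) · ∫₀¹ f(γ(t)) γ'(t) / ((γ(t) - α₀) ρ(α₀,t)) dt. In particular, if the modulation integral ∫₀¹ f(γ(t)) γ'(t) / ((γ(t) - α₀) ρ(α₀,t)) dt vanishes, then g'(α₀) = 0. -/
open Complex

set_option maxHeartbeats 1000000

/-- Proposition 3.1: the Plemelj-formula solution
`g(α) = (R(α)/(4πi)) ∫₀¹ f(γ(t))γ'(t)/((γ(t)-z)ρ(α,t)) dt` of the scalar RHP has derivative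
`g'(α₀) = -(R(α₀)/(8πi(z-α₀))) ∫₀¹ f(γ(t))γ'(t)/((γ(t)-α₀)ρ(α₀,t)) dt` in the endpoint `α`;
in particular, `g'(α₀) = 0` when the modulation integral vanishes. -/
theorem stmt_4
    (γ γ' : ℝ → ℂ)
    (hγ : ∀ t ∈ Set.Icc (0:ℝ) 1, HasDerivAt γ (γ' t) t)
    (hγ' : ContinuousOn γ' (Set.Icc (0:ℝ) 1))
    (f : ℂ → ℂ) (hf : ContinuousOn f (γ '' Set.Icc (0:ℝ) 1))
    (z β : ℂ) (hz : z ∉ γ '' Set.Icc (0:ℝ) 1)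
    (U : Set ℂ) (hU : IsOpen U) (α₀ : ℂ) (hα₀ : α₀ ∈ U)
    (h0 : (z - α₀) * (z - β) ≠ 0)
    (ρ : ℂ → ℝ → ℂ)
    (hρcont : ContinuousOn (fun p : ℂ × ℝ => ρ p.1 p.2) (U ×ˢ Set.Icc (0:ℝ) 1))
    (hρdiff : ∀ t ∈ Set.Icc (0:ℝ) 1, DifferentiableOn ℂ (fun α => ρ α t) U)
    (hρsq : ∀ α ∈ U, ∀ t ∈ Set.Icc (0:ℝ) 1, (ρ α t) ^ 2 = (γ t - α) * (γ t - β))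
    (hρne : ∀ α ∈ U, ∀ t ∈ Set.Icc (0:ℝ) 1, ρ α t ≠ 0)
    (R : ℂ → ℂ) (hR : DifferentiableAt ℂ R α₀)
    (hRsq : ∀ α ∈ U, (R α) ^ 2 = (z - α) * (z - β))
    (g : ℂ → ℂ)
    (hg : ∀ α : ℂ, g α = R α / (4 * Real.pi * Complex.I) *
        ∫ t in (0:ℝ)..1, f (γ t) * γ' t / ((γ t - z) * ρ α t)) :
    HasDerivAt g
      (-(R α₀ / (8 * Real.pi * Complex.I * (z - α₀))) *
        ∫ t in (0:ℝ)..1, f (γ t) * γ' t / ((γ t - α₀) * ρ α₀ t)) α₀ ∧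
    ((∫ t in (0:ℝ)..1, f (γ t) * γ' t / ((γ t - α₀) * ρ α₀ t)) = 0 →
      HasDerivAt g 0 α₀) := by
  classical
  have h01 : (0:ℝ) ≤ 1 := zero_le_one
  have huIoc : Set.uIoc (0:ℝ) 1 = Set.Ioc 0 1 := Set.uIoc_of_le h01
  have huIcc : Set.uIcc (0:ℝ) 1 = Set.Icc 0 1 := Set.uIcc_of_le h01
  have hγc : ContinuousOn γ (Set.Icc 0 1) :=
    fun t ht => (hγ t ht).continuousAt.continuousWithinAt
  have hnum : ContinuousOn (fun t => f (γ t) * γ' t) (Set.Icc (0:ℝ) 1) :=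
    (hf.comp hγc (Set.mapsTo_image γ _)).mul hγ'
  have hzne : ∀ t ∈ Set.Icc (0:ℝ) 1, γ t - z ≠ 0 := by
    intro t ht h
    exact hz ⟨t, ht, by rwa [sub_eq_zero] at h⟩
  have hprodne : ∀ α ∈ U, ∀ t ∈ Set.Icc (0:ℝ) 1, (γ t - α) * (γ t - β) ≠ 0 := by
    intro α hα t ht
    rw [← hρsq α hα t ht]
    exact pow_ne_zero _ (hρne α hα t ht)
  have hαne : ∀ α ∈ U, ∀ t ∈ Set.Icc (0:ℝ) 1, γ t - α ≠ 0 :=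
    fun α hα t ht => left_ne_zero_of_mul (hprodne α hα t ht)
  have hβne : ∀ t ∈ Set.Icc (0:ℝ) 1, γ t - β ≠ 0 :=
    fun t ht => right_ne_zero_of_mul (hprodne α₀ hα₀ t ht)
  have hzα : z - α₀ ≠ 0 := left_ne_zero_of_mul h0
  have hzβ : z - β ≠ 0 := right_ne_zero_of_mul h0
  -- choose a closed ball inside U
  obtain ⟨r, hr0, hrU⟩ := Metric.isOpen_iff.1 hU α₀ hα₀
  set ε := r / 2 with hε
  have hε0 : 0 < ε := by positivity
  have hballU : Metric.ball α₀ ε ⊆ U :=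
    (Metric.ball_subset_ball (by simp [hε]; linarith)).trans hrU
  have hcballU : Metric.closedBall α₀ ε ⊆ U :=
    (Metric.closedBall_subset_ball (by simp [hε]; linarith)).trans hrU
  -- slicewise continuity of ρ
  have hρt : ∀ x ∈ U, ContinuousOn (fun t => ρ x t) (Set.Icc (0:ℝ) 1) := by
    intro x hx
    exact hρcont.comp (Continuous.continuousOn (by continuity))
      (fun t ht => Set.mk_mem_prod hx ht)
  -- integrands
  set F : ℂ → ℝ → ℂ := fun α t => f (γ t) * γ' t / ((γ t - z) * ρ α t) with hFdef
  set F' : ℂ → ℝ → ℂ :=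
    fun α t => f (γ t) * γ' t / ((γ t - z) * (2 * ρ α t * (γ t - α))) with hF'def
  have hFc : ∀ x ∈ U, ContinuousOn (F x) (Set.Icc (0:ℝ) 1) := by
    intro x hx
    exact hnum.div ((hγc.sub continuousOn_const).mul (hρt x hx))
      (fun t ht => mul_ne_zero (hzne t ht) (hρne x hx t ht))
  have hF'c : ∀ x ∈ U, ContinuousOn (F' x) (Set.Icc (0:ℝ) 1) := by
    intro x hx
    refine hnum.div ((hγc.sub continuousOn_const).mul
      ((continuousOn_const.mul (hρt x hx)).mul (hγc.sub continuousOn_const))) ?_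
    intro t ht
    exact mul_ne_zero (hzne t ht)
      (mul_ne_zero (mul_ne_zero two_ne_zero (hρne x hx t ht)) (hαne x hx t ht))
  -- minimum of ‖ρ‖ on compact set
  have hKcomp : IsCompact (Metric.closedBall α₀ ε ×ˢ Set.Icc (0:ℝ) 1) :=
    (isCompact_closedBall _ _).prod isCompact_Icc
  have hKne : (Metric.closedBall α₀ ε ×ˢ Set.Icc (0:ℝ) 1).Nonempty :=
    ⟨(α₀, 0), Set.mk_mem_prod (Metric.mem_closedBall_self hε0.le) (by norm_num)⟩
  have hKsub : Metric.closedBall α₀ ε ×ˢ Set.Icc (0:ℝ) 1 ⊆ U ×ˢ Set.Icc (0:ℝ) 1 :=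
    Set.prod_mono hcballU subset_rfl
  obtain ⟨p₀, hp₀, hp₀min⟩ := hKcomp.exists_isMinOn hKne ((hρcont.mono hKsub).norm)
  set c := ‖ρ p₀.1 p₀.2‖ with hc
  have hc0 : 0 < c :=
    norm_pos_iff.2 (hρne p₀.1 (hcballU hp₀.1) p₀.2 hp₀.2)
  -- bound for the α-derivative of the integrand
  have hGc : ContinuousOn (fun t => f (γ t) * γ' t * (γ t - β) / (γ t - z))
      (Set.Icc (0:ℝ) 1) :=
    (hnum.mul (hγc.sub continuousOn_const)).div (hγc.sub continuousOn_const) hzne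
  obtain ⟨C, hC⟩ := isCompact_Icc.exists_bound_of_continuousOn hGc
  have hC0 : 0 ≤ C := le_trans (norm_nonneg _) (hC 0 (by norm_num))
  have hbound : ∀ t ∈ Set.Icc (0:ℝ) 1, ∀ x ∈ Metric.ball α₀ ε,
      ‖F' x t‖ ≤ C / (2 * c ^ 3) := by
    intro t ht x hx
    have hxU : x ∈ U := hballU hx
    have hsq := hρsq x hxU t ht
    have hρn := hρne x hxU t ht
    have hβn := hβne t ht
    have hzn := hzne t ht
    have hαn := hαne x hxU t ht
    have heq : F' x t = (f (γ t) * γ' t * (γ t - β) / (γ t - z)) / (2 * ρ x t ^ 3) := by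
      simp only [hF'def]
      field_simp
      linear_combination (f (γ t) * γ' t) * hsq
    rw [heq]
    have hρge : c ≤ ‖ρ x t‖ :=
      hp₀min (Set.mk_mem_prod (Metric.ball_subset_closedBall hx) ht)
    have h1 : ‖(f (γ t) * γ' t * (γ t - β) / (γ t - z)) / (2 * ρ x t ^ 3)‖
        = ‖f (γ t) * γ' t * (γ t - β) / (γ t - z)‖ / (2 * ‖ρ x t‖ ^ 3) := by
      rw [norm_div, norm_mul, norm_pow]
      norm_num
    rw [h1]
    apply div_le_div₀ hC0 (hC t ht) (by positivity)
    gcongr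
  -- differentiability in α of the integrand
  have hdiff : ∀ t ∈ Set.Icc (0:ℝ) 1, ∀ x ∈ Metric.ball α₀ ε,
      HasDerivAt (fun α => F α t) (F' x t) x := by
    intro t ht x hx
    have hxU : x ∈ U := hballU hx
    have hρx : HasDerivAt (fun α => ρ α t) (deriv (fun α => ρ α t) x) x :=
      ((hρdiff t ht x hxU).differentiableAt (hU.mem_nhds hxU)).hasDerivAt
    set D := deriv (fun α => ρ α t) x with hD
    have hsq2 : HasDerivAt (fun α => (ρ α t) ^ 2) (-(γ t - β)) x := by
      have h1 : HasDerivAt (fun α : ℂ => (γ t - α) * (γ t - β)) (-(γ t - β)) x := by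
        simpa using ((hasDerivAt_id x).const_sub (γ t)).mul_const (γ t - β)
      apply h1.congr_of_eventuallyEq
      filter_upwards [hU.mem_nhds hxU] with y hy
      exact hρsq y hy t ht
    have hDval : 2 * ρ x t * D = -(γ t - β) := by
      have h2 : HasDerivAt (fun α => (ρ α t) ^ 2) (2 * ρ x t * D) x := by
        simpa [mul_comm] using hρx.fun_pow 2
      exact h2.unique hsq2
    have hρn := hρne x hxU t ht
    have hzn := hzne t ht
    have hαn := hαne x hxU t ht
    have hβn := hβne t ht
    have hsq := hρsq x hxU t ht
    have hden : HasDerivAt (fun α => (γ t - z) * ρ α t) ((γ t - z) * D) x :=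
      hρx.const_mul _
    have hmain := (hasDerivAt_const x (f (γ t) * γ' t)).fun_div hden
      (mul_ne_zero hzn hρn)
    convert hmain using 1
    · rfl
    · rfl
    simp only [hF'def]
    field_simp
    linear_combination (norm := skip) (f (γ t) * γ' t / ρ x t) * hsq +
      (f (γ t) * γ' t * (γ t - x) / ρ x t) * hDval
    field_simp
    ring
  -- measurability data for the dominated-derivative theorem
  have hΙsub : Set.uIoc (0:ℝ) 1 ⊆ Set.Icc (0:ℝ) 1 := by
    rw [huIoc]; exact Set.Ioc_subset_Icc_self
  have hmeasΙ : MeasurableSet (Set.uIoc (0:ℝ) 1) := measurableSet_uIoc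
  have hF_meas : ∀ᶠ x in nhds α₀,
      MeasureTheory.AEStronglyMeasurable (F x)
        (MeasureTheory.volume.restrict (Set.uIoc (0:ℝ) 1)) := by
    filter_upwards [hU.mem_nhds hα₀] with x hx
    exact ((hFc x hx).mono hΙsub).aestronglyMeasurable hmeasΙ
  have hF_int : IntervalIntegrable (F α₀) MeasureTheory.volume 0 1 :=
    ((hFc α₀ hα₀).mono (le_of_eq huIcc)).intervalIntegrable
  have hF'_meas : MeasureTheory.AEStronglyMeasurable (F' α₀)
      (MeasureTheory.volume.restrict (Set.uIoc (0:ℝ) 1)) :=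
    ((hF'c α₀ hα₀).mono hΙsub).aestronglyMeasurable hmeasΙ
  have hF'_int : IntervalIntegrable (F' α₀) MeasureTheory.volume 0 1 :=
    ((hF'c α₀ hα₀).mono (le_of_eq huIcc)).intervalIntegrable
  -- derivative of the integral
  have hIder : HasDerivAt (fun α => ∫ t in (0:ℝ)..1, F α t)
      (∫ t in (0:ℝ)..1, F' α₀ t) α₀ := by
    refine (intervalIntegral.hasDerivAt_integral_of_dominated_loc_of_deriv_le
      (bound := fun _ => C / (2 * c ^ 3)) (Metric.ball_mem_nhds α₀ hε0) hF_meas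
      hF_int hF'_meas ?_ ?_ ?_).2
    · exact MeasureTheory.ae_of_all _ fun t ht x hx => hbound t (hΙsub ht) x hx
    · exact intervalIntegrable_const
    · exact MeasureTheory.ae_of_all _ fun t ht x hx => hdiff t (hΙsub ht) x hx
  -- derivative of R
  set R' := deriv R α₀ with hR'
  have hRα : R α₀ ≠ 0 := by
    intro h
    apply h0
    rw [← hRsq α₀ hα₀, h]
    ring
  have hR'val : 2 * R α₀ * R' = -(z - β) := by
    have h1 : HasDerivAt (fun α => (R α) ^ 2) (2 * R α₀ * R') α₀ := by
      simpa [mul_comm] using hR.hasDerivAt.fun_pow 2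
    have h3 : HasDerivAt (fun α : ℂ => (z - α) * (z - β)) (-(z - β)) α₀ := by
      simpa using ((hasDerivAt_id α₀).const_sub z).mul_const (z - β)
    have h2 : HasDerivAt (fun α => (R α) ^ 2) (-(z - β)) α₀ := by
      apply h3.congr_of_eventuallyEq
      filter_upwards [hU.mem_nhds hα₀] with y hy
      exact hRsq y hy
    exact h1.unique h2
  have hR2 : R' = -R α₀ / (2 * (z - α₀)) := by
    have key : R α₀ * (R' * (2 * (z - α₀))) = R α₀ * (-R α₀) := by
      linear_combination (z - α₀) * hR'val + hRsq α₀ hα₀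
    have h := mul_left_cancel₀ hRα key
    field_simp
    linear_combination h
  -- derivative of g
  have hπ : (Real.pi : ℂ) ≠ 0 := by
    exact_mod_cast Real.pi_ne_zero
  have hgder : HasDerivAt g
      (R' / (4 * Real.pi * Complex.I) * (∫ t in (0:ℝ)..1, F α₀ t)
        + R α₀ / (4 * Real.pi * Complex.I) * (∫ t in (0:ℝ)..1, F' α₀ t)) α₀ := by
    have h1 := (hR.hasDerivAt.div_const (4 * Real.pi * Complex.I)).mul hIder
    have h2 : g =ᶠ[nhds α₀]
        fun α => R α / (4 * Real.pi * Complex.I) * ∫ t in (0:ℝ)..1, F α t :=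
      Filter.Eventually.of_forall fun x => hg x
    exact (h1.congr_of_eventuallyEq h2).congr_deriv (by ring)
  -- partial fraction identity for the derivative integral
  have hJc : ContinuousOn (fun t => f (γ t) * γ' t / ((γ t - α₀) * ρ α₀ t))
      (Set.Icc (0:ℝ) 1) :=
    hnum.div ((hγc.sub continuousOn_const).mul (hρt α₀ hα₀))
      (fun t ht => mul_ne_zero (hαne α₀ hα₀ t ht) (hρne α₀ hα₀ t ht))
  have hJint : IntervalIntegrable (fun t => f (γ t) * γ' t / ((γ t - α₀) * ρ α₀ t))
      MeasureTheory.volume 0 1 :=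
    (hJc.mono (le_of_eq huIcc)).intervalIntegrable
  have key : (∫ t in (0:ℝ)..1, F' α₀ t)
      = (2 * (z - α₀))⁻¹ * ((∫ t in (0:ℝ)..1, F α₀ t)
          - ∫ t in (0:ℝ)..1, f (γ t) * γ' t / ((γ t - α₀) * ρ α₀ t)) := by
    rw [← intervalIntegral.integral_sub hF_int hJint, ← intervalIntegral.integral_const_mul]
    apply intervalIntegral.integral_congr
    intro t ht
    rw [huIcc] at ht
    have h1 := hzne t ht
    have h2 := hρne α₀ hα₀ t ht
    have h3 := hαne α₀ hα₀ t ht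
    simp only [hF'def, hFdef]
    field_simp
    ring
  -- conclude
  have hder : HasDerivAt g
      (-(R α₀ / (8 * Real.pi * Complex.I * (z - α₀))) *
        ∫ t in (0:ℝ)..1, f (γ t) * γ' t / ((γ t - α₀) * ρ α₀ t)) α₀ := by
    refine hgder.congr_deriv ?_
    rw [key, hR2]
    have hI : Complex.I ≠ 0 := Complex.I_ne_zero
    set Iv := ∫ t in (0:ℝ)..1, F α₀ t with hIv
    set Jv := ∫ t in (0:ℝ)..1, f (γ t) * γ' t / ((γ t - α₀) * ρ α₀ t) with hJv
    have hu : (4 * (Real.pi : ℂ) * Complex.I) ≠ 0 :=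
      mul_ne_zero (mul_ne_zero (by norm_num) hπ) Complex.I_ne_zero
    have h8 : (8 : ℂ) * Real.pi * Complex.I * (z - α₀)
        = 2 * (4 * Real.pi * Complex.I) * (z - α₀) := by ring
    rw [h8]
    generalize (4 * (Real.pi : ℂ) * Complex.I) = u at hu ⊢
    field_simp
    ring
  exact ⟨hder, fun h => by simpa [h] using hder⟩
end

section
/- Let μ = 1/(2√2) and let x ∈ ℂ with cosh 2x ≠ 0 and e^{4x} = (1 - 2√2·i)/3. Then α(x)² = -27/32, where α(x) = (μ·sinh 2x + i·cosh 2x)/cosh²2x; equivalently α(x) = ±(3√3/(4√2))·i ≈ ±0.91856·i. -/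
open Complex

/-- Section 7.3: at the critical phase strength `μ* = 1/(2√2)`, the ramification point with
`e^{4x} = (1 - 2√2 i)/3` is mapped to the log point `α(x) = ±(3√3/(4√2)) i`, i.e.
`α(x)² = -27/32`. -/
theorem stmt_13 (x : ℂ) (hx : Complex.cosh (2 * x) ≠ 0)
    (hex : Complex.exp (4 * x) = (1 - 2 * (Real.sqrt 2 : ℂ) * Complex.I) / 3)
    (α : ℂ)
    (hα : α = (((1 / (2 * Real.sqrt 2) : ℝ) : ℂ) * Complex.sinh (2 * x) +
        Complex.I * Complex.cosh (2 * x)) / (Complex.cosh (2 * x)) ^ 2) :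
    α ^ 2 = -27 / 32 ∧
      (α = ((3 * Real.sqrt 3 / (4 * Real.sqrt 2) : ℝ) : ℂ) * Complex.I ∨
        α = -(((3 * Real.sqrt 3 / (4 * Real.sqrt 2) : ℝ) : ℂ) * Complex.I)) := by
  set c : ℂ := Complex.cosh (2 * x) with hc
  set sh : ℂ := Complex.sinh (2 * x) with hsh
  set s : ℂ := (Real.sqrt 2 : ℂ) with hsdef
  have hs : s ^ 2 = 2 := by
    rw [hsdef]
    norm_cast
    exact Real.sq_sqrt (by norm_num)
  have hsr : Real.sqrt 2 ≠ 0 := by positivity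
  have hE1 : c ^ 2 - sh ^ 2 = 1 := Complex.cosh_sq_sub_sinh_sq (2 * x)
  have hw : (c + sh) ^ 2 = (1 - 2 * s * I) / 3 := by
    rw [hc, hsh, hsdef, Complex.cosh_add_sinh, sq, ← Complex.exp_add,
      show (2 : ℂ) * x + 2 * x = 4 * x by ring]
    exact hex
  have hE2 : 2 * c ^ 2 - 1 + 2 * sh * c = (1 - 2 * s * I) / 3 := by
    linear_combination hw + hE1
  have hne : (1 : ℂ) - 2 * s * I ≠ 0 := by
    intro h
    have h' := congrArg Complex.re h
    simp [hsdef, Complex.ext_iff] at h'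
  have key : (1 - 2 * s * I) * (3 * c ^ 2 - 2) = 0 := by
    linear_combination (9 * c ^ 2) * hE1 +
      (3 / 2) * (3 * sh * c + 2 - s * I - 3 * c ^ 2) * hE2 + I ^ 2 * hs + 2 * Complex.I_sq
  have hc2 : c ^ 2 = 2 / 3 := by
    rcases mul_eq_zero.mp key with h | h
    · exact absurd h hne
    · linear_combination h / 3
  have hshc : sh * c = -(s * I) / 3 := by linear_combination hE2 / 2 - hc2
  have hsh2 : sh ^ 2 = -(1 / 3) := by linear_combination hc2 - hE1
  have hmuR : (1 / (2 * Real.sqrt 2) : ℝ) = Real.sqrt 2 / 4 := by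
    rw [div_eq_div_iff (by positivity) (by norm_num)]
    nlinarith [Real.mul_self_sqrt (show (0:ℝ) ≤ 2 by norm_num)]
  have hmu : ((1 / (2 * Real.sqrt 2) : ℝ) : ℂ) = s / 4 := by
    rw [hmuR, hsdef]
    push_cast
    ring
  have h1 : α ^ 2 = -27 / 32 := by
    rw [hα, hmu, div_pow, div_eq_iff (pow_ne_zero 2 (pow_ne_zero 2 hx))]
    linear_combination (1 / 8) * hsh2 + (s * I / 2) * hshc +
      (27 / 32 * (c ^ 2 + 2 / 3) - 1) * hc2 + (sh ^ 2 / 16 - I ^ 2 / 6) * hs +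
      (c ^ 2 - 1 / 3) * Complex.I_sq
  refine ⟨h1, ?_⟩
  have hb2 : (((3 * Real.sqrt 3 / (4 * Real.sqrt 2) : ℝ) : ℂ) * I) ^ 2 = -27 / 32 := by
    have h3 : (3 * Real.sqrt 3 / (4 * Real.sqrt 2) : ℝ) ^ 2 = 27 / 32 := by
      rw [div_pow, mul_pow, mul_pow, Real.sq_sqrt (by norm_num : (0:ℝ) ≤ 3),
        Real.sq_sqrt (by norm_num : (0:ℝ) ≤ 2)]
      norm_num
    rw [mul_pow, Complex.I_sq, ← Complex.ofReal_pow, h3]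
    norm_num
  have hfac : (α - ((3 * Real.sqrt 3 / (4 * Real.sqrt 2) : ℝ) : ℂ) * I) *
      (α + ((3 * Real.sqrt 3 / (4 * Real.sqrt 2) : ℝ) : ℂ) * I) = 0 := by
    linear_combination h1 - hb2
  rcases mul_eq_zero.mp hfac with h | h
  · exact Or.inl (by linear_combination h)
  · exact Or.inr (by linear_combination h)
end

section
/- Let 0 < k₁ < k₂ ≤ 1 be real and let u₁, u₂ ∈ (0,1) satisfy u₁³ + 2k₁u₁² - 2k₁ = 0 and u₂³ + 2k₂u₂² - 2k₂ = 0. Then u₁ < u₂, i.e. the unique root u(k) ∈ (0,1) of u³ + 2ku² - 2k = 0 is a strictly increasing function of k on (0,1]. -/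
/-- Section 7.4: the unique root `u(k) ∈ (0,1)` of `u³ + 2ku² - 2k = 0` is strictly
increasing in `k` on `(0, 1]`. -/
theorem stmt_17 (k₁ k₂ u₁ u₂ : ℝ) (hk₁ : 0 < k₁) (hk : k₁ < k₂) (hk₂ : k₂ ≤ 1)
    (hu₁ : u₁ ∈ Set.Ioo (0:ℝ) 1) (hu₂ : u₂ ∈ Set.Ioo (0:ℝ) 1)
    (h₁ : u₁ ^ 3 + 2 * k₁ * u₁ ^ 2 - 2 * k₁ = 0)
    (h₂ : u₂ ^ 3 + 2 * k₂ * u₂ ^ 2 - 2 * k₂ = 0) :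
    u₁ < u₂ := by
  obtain ⟨hu₁0, hu₁1⟩ := hu₁
  obtain ⟨hu₂0, hu₂1⟩ := hu₂
  by_contra h
  push_neg at h
  have key : u₂^3*(1-u₁^2) - u₁^3*(1-u₂^2) = 2*(k₂-k₁)*(1-u₁^2)*(1-u₂^2) := by
    linear_combination (1-u₁^2)*h₂ - (1-u₂^2)*h₁
  have ha : (0:ℝ) < 1 - u₁^2 := by nlinarith
  have hb : (0:ℝ) < 1 - u₂^2 := by nlinarith
  have hpos : 0 < 2*(k₂-k₁)*(1-u₁^2)*(1-u₂^2) :=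
    mul_pos (mul_pos (mul_pos two_pos (sub_pos.mpr hk)) ha) hb
  have huv : (0:ℝ) < 1 - u₁*u₂ := by nlinarith
  nlinarith [mul_nonneg (sub_nonneg.mpr h) (sq_nonneg u₁),
    mul_nonneg (sub_nonneg.mpr h) (sq_nonneg u₂),
    mul_nonneg (sub_nonneg.mpr h) (mul_nonneg (mul_pos hu₁0 hu₂0).le huv.le)]
end
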